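/- Let < be a convex total order on Δ⁺ satisfying the additional property below, and let α < β be a minimal pair with α+β ∈ Δ⁺. Then there do not exist an integer k ≥ 1 and positive roots γ₁,…,γ_k ∈ Δ⁺ with α+β < γ_a < β for all 1 ≤ a ≤ k and γ₁+⋯+γ_k = α+2β. -/

import Mathlib

noncomputable section

namespace ADEShuffle

/-- The Euler form of a quiver with vertex set `I`, arrow set `A`,
source map `s` and target map `t`. -/
def eulerForm {I A : Type} [Fintype I] [Fintype A] (s t : A → I) (v w : I → ℤ) : ℤ :=
  (∑ i, v i * w i) - ∑ a, v (s a) * w (t a)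

/-- The real-coefficients Euler form. -/
def eulerFormR {I A : Type} [Fintype I] [Fintype A] (s t : A → I) (v w : I → ℝ) : ℝ :=
  (∑ i, v i * w i) - ∑ a, v (s a) * w (t a)

/-- The Euler form evaluated on dimension vectors in `ℕ^I`. -/
def eulerN {I A : Type} [Fintype I] [Fintype A] (s t : A → I) (v w : I → ℕ) : ℤ :=
  eulerForm s t (fun i => (v i : ℤ)) (fun i => (w i : ℤ))

/-- Positive roots: nonzero `v ∈ ℕ^I` with `(v,v) = 2`, where `(v,w) = ⟨v,w⟩ + ⟨w,v⟩`
is the symmetrized Euler form. -/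
def IsPosRoot {I A : Type} [Fintype I] [Fintype A] (s t : A → I) (v : I → ℕ) : Prop :=
  v ≠ 0 ∧ eulerN s t v v + eulerN s t v v = 2

section Aux
set_option linter.unusedSectionVars false
variable {I A : Type} [Fintype I] [Fintype A] (s t : A → I)

/-- cast of an ℕ-vector to a ℤ-vector -/
def cz (v : I → ℕ) : I → ℤ := fun i => (v i : ℤ)

/-- symmetrized Euler form -/
def B (v w : I → ℤ) : ℤ := eulerForm s t v w + eulerForm s t w v

lemma B_symm (v w : I → ℤ) : B s t v w = B s t w v := by simp [B]; ring

lemma ef_add_left (v w u : I → ℤ) :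
    eulerForm s t (v + w) u = eulerForm s t v u + eulerForm s t w u := by
  simp [eulerForm, add_mul, Finset.sum_add_distrib]; ring

lemma ef_add_right (v w u : I → ℤ) :
    eulerForm s t u (v + w) = eulerForm s t u v + eulerForm s t u w := by
  simp [eulerForm, mul_add, Finset.sum_add_distrib]; ring

lemma ef_zero_left (u : I → ℤ) : eulerForm s t 0 u = 0 := by simp [eulerForm]

lemma ef_zero_right (u : I → ℤ) : eulerForm s t u 0 = 0 := by simp [eulerForm]

lemma ef_neg_left (v u : I → ℤ) : eulerForm s t (-v) u = - eulerForm s t v u := by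
  simp [eulerForm]; ring

lemma ef_neg_right (v u : I → ℤ) : eulerForm s t u (-v) = - eulerForm s t u v := by
  simp [eulerForm]; ring

lemma B_add_left (v w u : I → ℤ) : B s t (v + w) u = B s t v u + B s t w u := by
  simp [B, ef_add_left, ef_add_right]; ring

lemma B_add_right (v w u : I → ℤ) : B s t u (v + w) = B s t u v + B s t u w := by
  simp [B, ef_add_left, ef_add_right]; ring

lemma B_neg_left (v u : I → ℤ) : B s t (-v) u = - B s t v u := by
  simp [B, ef_neg_left, ef_neg_right]; ring

lemma B_neg_right (v u : I → ℤ) : B s t u (-v) = - B s t u v := by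
  simp [B, ef_neg_left, ef_neg_right]; ring

lemma B_zero_left (u : I → ℤ) : B s t 0 u = 0 := by
  simp [B, ef_zero_left, ef_zero_right]

lemma B_sub_sub (v w : I → ℤ) :
    B s t (v - w) (v - w) = B s t v v - 2 * B s t v w + B s t w w := by
  have h1 : v - w = v + (-w) := by ring
  rw [h1, B_add_left, B_add_right, B_add_right, B_neg_left, B_neg_right, B_neg_right,
    B_neg_left, B_symm s t w v]
  ring

lemma B_add_add (v w : I → ℤ) :
    B s t (v + w) (v + w) = B s t v v + 2 * B s t v w + B s t w w := by
  rw [B_add_left, B_add_right, B_add_right, B_symm s t w v]; ring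

lemma cz_add (v w : I → ℕ) : cz (v + w) = cz v + cz w := by
  funext i; simp [cz]

lemma cz_inj {v w : I → ℕ} (h : cz v = cz w) : v = w := by
  funext i
  have := congrFun h i
  simpa [cz] using this

lemma cz_eq_zero {v : I → ℕ} : cz v = 0 ↔ v = 0 := by
  constructor
  · intro h; funext i; have := congrFun h i; simpa [cz] using this
  · rintro rfl; funext i; simp [cz]

lemma ef_cast (v w : I → ℤ) :
    eulerFormR s t (fun i => (v i : ℝ)) (fun i => (w i : ℝ)) = (eulerForm s t v w : ℝ) := by
  unfold eulerFormR eulerForm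
  push_cast
  ring

lemma root_B {v : I → ℕ} (h : IsPosRoot s t v) : B s t (cz v) (cz v) = 2 := h.2

lemma two_le_B (hPosDef : ∀ v : I → ℝ, v ≠ 0 → 0 < eulerFormR s t v v + eulerFormR s t v v)
    (v : I → ℤ) (hv : v ≠ 0) : 2 ≤ B s t v v := by
  have hvR : (fun i => (v i : ℝ)) ≠ 0 := by
    intro h
    apply hv
    funext i
    have := congrFun h i
    simpa using this
  have hpos := hPosDef _ hvR
  rw [ef_cast] at hpos
  have hBpos : (0:ℝ) < ((B s t v v : ℤ) : ℝ) := by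
    simpa [B] using hpos
  have hBpos' : 0 < B s t v v := by exact_mod_cast hBpos
  have heven : B s t v v = 2 * eulerForm s t v v := by simp [B]; ring
  omega

lemma B_le_one (hPosDef : ∀ v : I → ℝ, v ≠ 0 → 0 < eulerFormR s t v v + eulerFormR s t v v)
    {v w : I → ℕ} (hv : IsPosRoot s t v) (hw : IsPosRoot s t w) (hne : v ≠ w) :
    B s t (cz v) (cz w) ≤ 1 := by
  have hne' : cz v - cz w ≠ 0 := by
    intro h
    apply hne
    apply cz_inj
    have : cz v = cz w := by
      funext i; have := congrFun h i
      simpa [sub_eq_zero] using this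
    exact this
  have h2 := two_le_B s t hPosDef _ hne'
  rw [B_sub_sub, root_B s t hv, root_B s t hw] at h2
  omega

lemma cz_add_ne_zero {v w : I → ℕ} (hv : v ≠ 0) : cz v + cz w ≠ 0 := by
  intro h
  apply hv
  funext i
  have := congrFun h i
  simp only [Pi.add_apply, Pi.zero_apply, cz] at this
  show v i = 0
  omega

lemma add_ne_zero' {v w : I → ℕ} (hv : v ≠ 0) : v + w ≠ 0 := by
  intro h
  apply hv
  funext i
  have := congrFun h i
  simp only [Pi.add_apply, Pi.zero_apply] at this
  show v i = 0
  omega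

lemma neg_one_le_B
    (hPosDef : ∀ v : I → ℝ, v ≠ 0 → 0 < eulerFormR s t v v + eulerFormR s t v v)
    {v w : I → ℕ} (hv : IsPosRoot s t v) (hw : IsPosRoot s t w) :
    -1 ≤ B s t (cz v) (cz w) := by
  have hne' : cz v + cz w ≠ 0 := cz_add_ne_zero hv.1
  have h2 := two_le_B s t hPosDef _ hne'
  rw [B_add_add, root_B s t hv, root_B s t hw] at h2
  omega

lemma B_of_sum_root {v w : I → ℕ} (hv : IsPosRoot s t v) (hw : IsPosRoot s t w)
    (hvw : IsPosRoot s t (v + w)) : B s t (cz v) (cz w) = -1 := by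
  have h := root_B s t hvw
  rw [cz_add, B_add_add, root_B s t hv, root_B s t hw] at h
  omega

lemma root_of_B_neg_one {v w : I → ℕ} (hv : IsPosRoot s t v) (hw : IsPosRoot s t w)
    (hB : B s t (cz v) (cz w) = -1) : IsPosRoot s t (v + w) := by
  constructor
  · exact add_ne_zero' hv.1
  · have : B s t (cz (v+w)) (cz (v+w)) = 2 := by
      rw [cz_add, B_add_add, root_B s t hv, root_B s t hw, hB]; ring
    exact this

/-- every integer vector of norm 2 is plus or minus a positive root -/
lemma exists_posRoot_of_norm_two
    (hPosDef : ∀ v : I → ℝ, v ≠ 0 → 0 < eulerFormR s t v v + eulerFormR s t v v)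
    (v : I → ℤ) (h2 : B s t v v = 2) :
    ∃ w : I → ℕ, IsPosRoot s t w ∧ (cz w = v ∨ cz w = -v) := by
  classical
  set p : I → ℕ := fun i => (v i).toNat with hp
  set n : I → ℕ := fun i => (-(v i)).toNat with hn
  have hdecomp : v = cz p - cz n := by
    funext i; simp only [cz, hp, hn, Pi.sub_apply]; omega
  have hBpn : B s t (cz p) (cz n) ≤ 0 := by
    have h1 : ∀ i, (cz p) i * (cz n) i = 0 := by
      intro i
      simp only [cz, hp, hn]
      rcases le_or_gt (v i) 0 with h | h
      · have hz : (v i).toNat = 0 := by omega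
        simp [hz]
      · have hz : (-(v i)).toNat = 0 := by omega
        simp [hz]
    have hs1 : ∀ a : A, 0 ≤ (cz p) (s a) * (cz n) (t a) := by
      intro a
      exact mul_nonneg (Int.natCast_nonneg _) (Int.natCast_nonneg _)
    have hs2 : ∀ a : A, 0 ≤ (cz n) (s a) * (cz p) (t a) := by
      intro a
      exact mul_nonneg (Int.natCast_nonneg _) (Int.natCast_nonneg _)
    have heq : B s t (cz p) (cz n) =
        -((∑ a, (cz p) (s a) * (cz n) (t a)) + ∑ a, (cz n) (s a) * (cz p) (t a)) := by
      simp [B, eulerForm, h1, fun i => mul_comm ((cz n) i) ((cz p) i)]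
      ring
    have hge : 0 ≤ (∑ a, (cz p) (s a) * (cz n) (t a)) + ∑ a, (cz n) (s a) * (cz p) (t a) :=
      add_nonneg (Finset.sum_nonneg fun a _ => hs1 a) (Finset.sum_nonneg fun a _ => hs2 a)
    omega
  have hexp : B s t v v
      = B s t (cz p) (cz p) - 2 * B s t (cz p) (cz n) + B s t (cz n) (cz n) := by
    rw [hdecomp, B_sub_sub]
  have hcases : p = 0 ∨ n = 0 := by
    by_contra hcon
    push_neg at hcon
    have hp2 : 2 ≤ B s t (cz p) (cz p) :=
      two_le_B s t hPosDef _ (fun h => hcon.1 (cz_eq_zero.mp h))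
    have hn2 : 2 ≤ B s t (cz n) (cz n) :=
      two_le_B s t hPosDef _ (fun h => hcon.2 (cz_eq_zero.mp h))
    omega
  rcases hcases with hc | hc
  · -- p = 0, v = - cz n
    have hv : v = - cz n := by rw [hdecomp, hc, cz_eq_zero.2 rfl]; ring
    have hBn : B s t (cz n) (cz n) = 2 := by
      rw [hv, B_neg_left, B_neg_right] at h2; omega
    refine ⟨n, ⟨?_, hBn⟩, Or.inr (by rw [hv]; ring)⟩
    intro hnz
    rw [hnz, cz_eq_zero.2 rfl, B_zero_left] at hBn
    exact two_ne_zero hBn.symm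
  · -- n = 0, v = cz p
    have hv : v = cz p := by rw [hdecomp, hc, cz_eq_zero.2 rfl]; ring
    have hBp : B s t (cz p) (cz p) = 2 := by rw [← hv]; exact h2
    refine ⟨p, ⟨?_, hBp⟩, Or.inl hv.symm⟩
    intro hpz
    rw [hpz, cz_eq_zero.2 rfl, B_zero_left] at hBp
    exact two_ne_zero hBp.symm

end Aux

section Aux2
set_option linter.unusedSectionVars false
variable {I A : Type} [Fintype I] [Fintype A] (s t : A → I)

lemma B_sum_left (N : Multiset (I → ℤ)) (u : I → ℤ) :
    B s t N.sum u = (N.map (fun v => B s t v u)).sum := by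
  induction N using Multiset.induction_on with
  | empty => simp [B_zero_left]
  | cons a N ih => simp [Multiset.sum_cons, B_add_left, ih]

lemma B_sum_right (N : Multiset (I → ℤ)) (u : I → ℤ) :
    B s t u N.sum = (N.map (fun v => B s t u v)).sum := by
  rw [B_symm, B_sum_left]
  congr 1
  exact Multiset.map_congr rfl (fun v _ => B_symm s t v u)

lemma cz_zero : cz (0 : I → ℕ) = 0 := cz_eq_zero.2 rfl

lemma cz_msum (M : Multiset (I → ℕ)) : cz M.sum = (M.map cz).sum := by
  induction M using Multiset.induction_on with
  | empty => simp [cz_zero]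
  | cons a N ih => simp [Multiset.sum_cons, cz_add, ih]

lemma sum_get (L : List (I → ℕ)) : (∑ a : Fin L.length, L.get a) = L.sum := by
  induction L with
  | nil => simp
  | cons a L ih => rw [List.sum_cons, ← ih]; simp [Fin.sum_univ_succ]

end Aux2

/-- for a convex total order on the positive roots satisfying the
additional property (no family of roots `γ₁ ≤ … ≤ γ_k < δ₁ ≤ … ≤ δ_l` with equal sums),
if `α < β` is a minimal pair with `α + β` a positive root, then there are no `k ≥ 1`
positive roots `γ₁, …, γ_k` with `α + β < γ_a < β` and `γ₁ + ⋯ + γ_k = α + 2β`. -/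


theorem stmt1
    (I A : Type) [Fintype I] [Fintype A] (s t : A → I)
    (hNoLoops : ∀ a, s a ≠ t a)
    (hPosDef : ∀ v : I → ℝ, v ≠ 0 → 0 < eulerFormR s t v v + eulerFormR s t v v)
    (lt : (I → ℕ) → (I → ℕ) → Prop)
    (hIrrefl : ∀ α, IsPosRoot s t α → ¬ lt α α)
    (hTrans : ∀ α β γ, IsPosRoot s t α → IsPosRoot s t β → IsPosRoot s t γ →
      lt α β → lt β γ → lt α γ)
    (hTotal : ∀ α β, IsPosRoot s t α → IsPosRoot s t β → α ≠ β → lt α β ∨ lt β α)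
    (hConvex : ∀ α β, IsPosRoot s t α → IsPosRoot s t β → lt α β →
      IsPosRoot s t (α + β) → lt α (α + β) ∧ lt (α + β) β)
    (hExtra : ¬ ∃ (k l : ℕ) (γ : Fin k → (I → ℕ)) (δ : Fin l → (I → ℕ)),
      1 ≤ k ∧ 1 ≤ l ∧ (∀ a, IsPosRoot s t (γ a)) ∧ (∀ b, IsPosRoot s t (δ b)) ∧
      (∀ a b, lt (γ a) (δ b)) ∧ (∑ a, γ a) = (∑ b, δ b))
    (α β : I → ℕ) (hα : IsPosRoot s t α) (hβ : IsPosRoot s t β) (hlt : lt α β)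
    (hsum : IsPosRoot s t (α + β))
    (hmin : ¬ ∃ α' β', IsPosRoot s t α' ∧ IsPosRoot s t β' ∧
      lt α α' ∧ lt α' β' ∧ lt β' β ∧ α' + β' = α + β) :
    ¬ ∃ (k : ℕ) (γ : Fin k → (I → ℕ)), 1 ≤ k ∧
      (∀ a, IsPosRoot s t (γ a)) ∧
      (∀ a, lt (α + β) (γ a) ∧ lt (γ a) β) ∧
      (∑ a, γ a) = α + 2 • β := by
  classical
  have asym : ∀ a b, IsPosRoot s t a → IsPosRoot s t b → lt a b → ¬ lt b a := by
    intro a b ha hb h1 h2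
    exact hIrrefl a ha (hTrans a b a ha hb ha h1 h2)
  have hBab : B s t (cz α) (cz β) = -1 := B_of_sum_root s t hα hβ hsum
  have hltconv := hConvex α β hα hβ hlt hsum
  have hczαβ : cz (α + β) = cz α + cz β := cz_add α β
  have hBαβ2 : B s t (cz α + cz β) (cz α + cz β) = 2 := by
    rw [← hczαβ]; exact root_B s t hsum
  -- Dichotomy for a root u strictly between α+β and β with B(u, α+β) = 1
  have dich : ∀ u : I → ℕ, IsPosRoot s t u → lt (α+β) u → lt u β →
      B s t (cz u) (cz α + cz β) = 1 →
      ∃ (lx rx : List (I → ℕ)),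
        (∀ v ∈ lx, IsPosRoot s t v ∧ lt v α) ∧
        (∀ v ∈ rx, IsPosRoot s t v ∧ lt (α+β) v) ∧
        u + lx.sum = (α+β) + rx.sum := by
    intro u hu hu1 hu2 hB1
    have hw2 : B s t (cz α + cz β - cz u) (cz α + cz β - cz u) = 2 := by
      rw [B_sub_sub, hBαβ2, root_B s t hu, B_symm s t (cz α + cz β) (cz u), hB1]
      ring
    obtain ⟨ρ, hρroot, hρcase⟩ := exists_posRoot_of_norm_two s t hPosDef _ hw2
    rcases hρcase with hP | hN
    · -- u + ρ = α + β
      have hPeq : u + ρ = α + β := by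
        apply cz_inj
        rw [cz_add, cz_add, hP]; ring
      have hρu : ρ ≠ u := by
        intro h
        rw [h] at hP
        have h2 : cz α + cz β = cz u + cz u := by
          funext i
          have := congrFun hP i
          simp only [Pi.add_apply, Pi.sub_apply] at this ⊢
          omega
        rw [h2, B_add_right, root_B s t hu] at hB1
        omega
      have hρltu : lt ρ u := by
        rcases hTotal ρ u hρroot hu hρu with h | h
        · exact h
        · exfalso
          have hroot2 : IsPosRoot s t (u + ρ) := by rw [hPeq]; exact hsum
          have hc := (hConvex u ρ hu hρroot h hroot2).1
          rw [hPeq] at hc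
          exact asym _ _ hsum hu hu1 hc
      have hnot : ¬ lt α ρ := by
        intro hcon
        exact hmin ⟨ρ, u, hρroot, hu, hcon, hρltu, hu2, by rw [add_comm]; exact hPeq⟩
      have hρα : lt ρ α := by
        have hρα' : ρ ≠ α := by
          intro h
          rw [h] at hPeq
          have : u = β := by
            funext i
            have := congrFun hPeq i
            simp only [Pi.add_apply] at this
            omega
          rw [this] at hu2
          exact hIrrefl β hβ hu2
        rcases hTotal ρ α hρroot hα hρα' with h | h
        · exact h
        · exact absurd h hnot
      refine ⟨[ρ], [], ?_, ?_, ?_⟩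
      · intro v hv
        simp only [List.mem_singleton] at hv
        subst hv
        exact ⟨hρroot, hρα⟩
      · intro v hv; simp at hv
      · simpa using hPeq
    · -- u = (α + β) + ρ
      have hNeq : (α+β) + ρ = u := by
        apply cz_inj
        rw [cz_add, hczαβ, hN]; ring
      have hραβ : ρ ≠ α + β := by
        intro h
        rw [h] at hNeq
        have h2 : cz u = (cz α + cz β) + (cz α + cz β) := by
          rw [← hNeq, cz_add, hczαβ]
        rw [h2, B_add_left, hBαβ2] at hB1
        omega
      have hltρ : lt (α+β) ρ := by
        rcases hTotal (α+β) ρ hsum hρroot (fun h => hραβ h.symm) with h | h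
        · exact h
        · exfalso
          have hroot2 : IsPosRoot s t (ρ + (α+β)) := by
            rw [add_comm, hNeq]; exact hu
          have hc := (hConvex ρ (α+β) hρroot hsum h hroot2).2
          rw [add_comm, hNeq] at hc
          exact asym _ _ hsum hu hu1 hc
      refine ⟨[], [ρ], ?_, ?_, ?_⟩
      · intro v hv; simp at hv
      · intro v hv
        simp only [List.mem_singleton] at hv
        subst hv
        exact ⟨hρroot, hltρ⟩
      · simpa using hNeq.symm
  -- Key claim by induction on a bound for the cardinality
  have key : ∀ n (M : Multiset (I → ℕ)), Multiset.card M ≤ n →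
      (∀ x ∈ M, IsPosRoot s t x ∧ lt (α+β) x ∧ lt x β) →
      M.sum = α + 2 • β → False := by
    intro n
    induction n with
    | zero =>
      intro M hcard hmem hsumM
      have hM0 : M = 0 := Multiset.card_eq_zero.mp (Nat.le_zero.mp hcard)
      rw [hM0] at hsumM
      apply hα.1
      funext i
      have h0 := congrFun hsumM i
      simp only [Multiset.sum_zero, Pi.add_apply, Pi.zero_apply, Pi.smul_apply,
        smul_eq_mul] at h0
      show α i = 0
      omega
    | succ n ih =>
      intro M hcard hmem hsumM
      by_cases hpair : ∃ x ∈ M, ∃ y ∈ M.erase x, B s t (cz x) (cz y) = -1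
      · -- merge two roots
        obtain ⟨x, hx, y, hy, hBxy⟩ := hpair
        have hxroot := (hmem x hx).1
        have hyroot := (hmem y (Multiset.mem_of_mem_erase hy)).1
        have hxyroot : IsPosRoot s t (x+y) := root_of_B_neg_one s t hxroot hyroot hBxy
        have hxney : x ≠ y := by
          intro h
          rw [h, root_B s t hyroot] at hBxy
          omega
        have hxyband : lt (α+β) (x+y) ∧ lt (x+y) β := by
          rcases hTotal x y hxroot hyroot hxney with h | h
          · have hc := hConvex x y hxroot hyroot h hxyroot
            exact ⟨hTrans _ x _ hsum hxroot hxyroot (hmem x hx).2.1 hc.1,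
                   hTrans _ y _ hxyroot hyroot hβ hc.2
                     (hmem y (Multiset.mem_of_mem_erase hy)).2.2⟩
          · have hyx : IsPosRoot s t (y+x) := by rwa [add_comm] at hxyroot
            have hc := hConvex y x hyroot hxroot h hyx
            have hc1 := hc.1; have hc2 := hc.2
            rw [add_comm y x] at hc1 hc2
            exact ⟨hTrans _ y _ hsum hyroot hxyroot
                     (hmem y (Multiset.mem_of_mem_erase hy)).2.1 hc1,
                   hTrans _ x _ hxyroot hxroot hβ hc2 (hmem x hx).2.2⟩
        have hMx : x ::ₘ M.erase x = M := Multiset.cons_erase hx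
        have hMy : y ::ₘ (M.erase x).erase y = M.erase x := Multiset.cons_erase hy
        apply ih ((x+y) ::ₘ ((M.erase x).erase y))
        · have h1 : Multiset.card M = Multiset.card ((M.erase x).erase y) + 2 := by
            rw [← hMx, ← hMy]; simp
          simp only [Multiset.card_cons]
          omega
        · intro z hz
          rw [Multiset.mem_cons] at hz
          rcases hz with rfl | hz
          · exact ⟨hxyroot, hxyband⟩
          · exact hmem z (Multiset.mem_of_mem_erase (Multiset.mem_of_mem_erase hz))
        · rw [Multiset.sum_cons, ← hsumM, ← hMx, ← hMy]
          simp [Multiset.sum_cons, add_assoc]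
      · -- no mergeable pair: card must be 3, then conclude
        push_neg at hpair
        have hge : ∀ x ∈ M, ∀ y ∈ M.erase x, 0 ≤ B s t (cz x) (cz y) := by
          intro x hx y hy
          have h1 := neg_one_le_B s t hPosDef (hmem x hx).1
            (hmem y (Multiset.mem_of_mem_erase hy)).1
          have h2 := hpair x hx y hy
          omega
        have hczsum : cz M.sum = cz α + cz β + cz β := by
          rw [hsumM]
          funext i
          simp only [cz, Pi.add_apply, Pi.smul_apply, smul_eq_mul]
          push_cast
          ring
        have h6 : B s t (cz M.sum) (cz M.sum) = 6 := by
          rw [hczsum, B_add_add, hBαβ2, B_add_left, hBab, root_B s t hβ]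
          ring
        have h3 : B s t (cz M.sum) (cz β) = 3 := by
          rw [hczsum, B_add_left, B_add_left, hBab, root_B s t hβ]
          ring
        -- each element pairs to at most 1 with β
        have hβle : ∀ x ∈ M, B s t (cz x) (cz β) ≤ 1 := by
          intro x hx
          refine B_le_one s t hPosDef (hmem x hx).1 hβ ?_
          intro h
          rw [h] at hx
          exact hIrrefl β hβ (hmem β hx).2.2
        -- card ≥ 3
        have hsum3 : (Multiset.map (fun x => B s t (cz x) (cz β)) M).sum = 3 := by
          have h := B_sum_left s t (M.map cz) (cz β)
          rw [← cz_msum, Multiset.map_map] at h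
          simp only [Function.comp] at h
          rw [h3] at h
          exact h.symm
        have hcard_ge : 3 ≤ Multiset.card M := by
          have hb : ∀ b ∈ Multiset.map (fun x => B s t (cz x) (cz β)) M, b ≤ (1:ℤ) := by
            intro b hb
            obtain ⟨x, hx, rfl⟩ := Multiset.mem_map.mp hb
            exact hβle x hx
          have := Multiset.sum_le_card_nsmul _ _ hb
          rw [hsum3, Multiset.card_map] at this
          have h1 : (Multiset.card M) • (1:ℤ) = (Multiset.card M : ℤ) := by simp
          omega
        -- card ≤ 3
        have hper : ∀ x ∈ M, 2 ≤ B s t (cz x) (cz M.sum) := by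
          intro x hx
          have hMx : M.sum = x + (M.erase x).sum := by
            conv_lhs => rw [← Multiset.cons_erase hx]
            rw [Multiset.sum_cons]
          rw [hMx, cz_add, B_add_right, root_B s t (hmem x hx).1]
          have hnn : 0 ≤ B s t (cz x) (cz (M.erase x).sum) := by
            rw [cz_msum, B_sum_right]
            apply Multiset.sum_nonneg
            intro b hb
            rw [Multiset.map_map] at hb
            obtain ⟨y, hy, rfl⟩ := Multiset.mem_map.mp hb
            exact hge x hx y hy
          omega
        have hsum6 : (Multiset.map (fun x => B s t (cz x) (cz M.sum)) M).sum = 6 := by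
          have h := B_sum_left s t (M.map cz) (cz M.sum)
          rw [← cz_msum, Multiset.map_map] at h
          simp only [Function.comp] at h
          rw [h6] at h
          exact h.symm
        have hcard_le : Multiset.card M ≤ 3 := by
          have hball : ∀ b ∈ Multiset.map (fun x => B s t (cz x) (cz M.sum)) M, (2:ℤ) ≤ b := by
            intro b hb
            obtain ⟨x, hx, rfl⟩ := Multiset.mem_map.mp hb
            exact hper x hx
          have h2 := Multiset.card_nsmul_le_sum hball
          rw [hsum6, Multiset.card_map] at h2
          have h1 : (Multiset.card M) • (2:ℤ) = 2 * (Multiset.card M : ℤ) := by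
            simp [nsmul_eq_mul]; ring
          omega
        have hcard3 : Multiset.card M = 3 := le_antisymm hcard_le hcard_ge
        obtain ⟨x, y, z, hM3⟩ := Multiset.card_eq_three.mp hcard3
        -- memberships
        have hxM : x ∈ M := by rw [hM3]; simp
        have hyM : y ∈ M := by rw [hM3]; simp
        have hzM : z ∈ M := by rw [hM3]; simp
        have hxr := hmem x hxM; have hyr := hmem y hyM; have hzr := hmem z hzM
        -- pairwise nonnegativity
        have hyex : y ∈ M.erase x := by
          rw [hM3, Multiset.insert_eq_cons, Multiset.erase_cons_head]
          simp
        have hzex : z ∈ M.erase x := by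
          rw [hM3, Multiset.insert_eq_cons, Multiset.erase_cons_head]
          simp
        have hzey : z ∈ M.erase y := by
          by_cases hzy : z = y
          · subst hzy
            have hc : 2 ≤ Multiset.count z M := by
              rw [hM3]
              rw [show ({x, z, z} : Multiset (I → ℕ)) = x ::ₘ z ::ₘ {z} from rfl]
              rw [Multiset.count_cons, Multiset.count_cons, Multiset.count_singleton]
              simp
            have hc2 := Multiset.count_erase_self z M
            have : 0 < Multiset.count z (M.erase z) := by omega
            exact Multiset.count_pos.mp this
          · exact (Multiset.mem_erase_of_ne hzy).2 hzM
        have hBxy0 := hge x hxM y hyex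
        have hBxz0 := hge x hxM z hzex
        have hByz0 := hge y hyM z hzey
        -- sum of x,y,z
        have hxyz : x + y + z = α + 2 • β := by
          rw [← hsumM, hM3]
          simp [Multiset.sum_cons, add_assoc]
        have hczxyz : cz x + cz y + cz z = cz α + cz β + cz β := by
          rw [← cz_add, ← cz_add, hxyz]
          funext i
          simp only [cz, Pi.add_apply, Pi.smul_apply, smul_eq_mul]
          push_cast
          ring
        -- pairwise B are zero
        have hpairsum : B s t (cz x) (cz y) + B s t (cz x) (cz z)
            + B s t (cz y) (cz z) = 0 := by
          have h := h6
          rw [← hczsum] at hczxyz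
          rw [← hczxyz] at h
          rw [B_add_add, B_add_add, B_add_left, root_B s t hxr.1, root_B s t hyr.1,
            root_B s t hzr.1] at h
          omega
        have hBxy : B s t (cz x) (cz y) = 0 := by omega
        have hBxz : B s t (cz x) (cz z) = 0 := by omega
        have hByz : B s t (cz y) (cz z) = 0 := by omega
        -- B with β all equal 1
        have hβsum : B s t (cz x) (cz β) + B s t (cz y) (cz β)
            + B s t (cz z) (cz β) = 3 := by
          have h := h3
          rw [← hczsum] at hczxyz
          rw [← hczxyz, B_add_left, B_add_left] at h
          omega
        have hxβ1 : B s t (cz x) (cz β) = 1 := by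
          have h1 := hβle x hxM; have h2 := hβle y hyM; have h3 := hβle z hzM
          omega
        have hyβ1 : B s t (cz y) (cz β) = 1 := by
          have h1 := hβle x hxM; have h2 := hβle y hyM; have h3 := hβle z hzM
          omega
        have hzβ1 : B s t (cz z) (cz β) = 1 := by
          have h1 := hβle x hxM; have h2 := hβle y hyM; have h3 := hβle z hzM
          omega
        -- B with α+β equal 1
        have hxαβ : B s t (cz x) (cz α + cz β) = 1 := by
          have h : B s t (cz x) (cz α + cz β + cz β) = 2 := by
            rw [← hczxyz, B_add_right, B_add_right, root_B s t hxr.1, hBxy, hBxz]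
            ring
          rw [B_add_right, hxβ1] at h
          omega
        have hyαβ : B s t (cz y) (cz α + cz β) = 1 := by
          have h : B s t (cz y) (cz α + cz β + cz β) = 2 := by
            rw [← hczxyz, B_add_right, B_add_right, root_B s t hyr.1,
              B_symm s t (cz y) (cz x), hBxy, hByz]
            ring
          rw [B_add_right, hyβ1] at h
          omega
        have hzαβ : B s t (cz z) (cz α + cz β) = 1 := by
          have h : B s t (cz z) (cz α + cz β + cz β) = 2 := by
            rw [← hczxyz, B_add_right, B_add_right, root_B s t hzr.1,
              B_symm s t (cz z) (cz x), hBxz, B_symm s t (cz z) (cz y), hByz]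
            ring
          rw [B_add_right, hzβ1] at h
          omega
        -- apply the dichotomy
        obtain ⟨lx, rx, hlx, hrx, hex⟩ := dich x hxr.1 hxr.2.1 hxr.2.2 hxαβ
        obtain ⟨ly, ry, hly, hry, hey⟩ := dich y hyr.1 hyr.2.1 hyr.2.2 hyαβ
        obtain ⟨lz, rz, hlz, hrz, hez⟩ := dich z hzr.1 hzr.2.1 hzr.2.2 hzαβ
        set L : List (I → ℕ) := lx ++ ly ++ lz with hL
        set R0 : List (I → ℕ) := rx ++ ry ++ rz with hR0
        have master : L.sum = (α + α + β) + R0.sum := by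
          funext i
          have e1 := congrFun hex i
          have e2 := congrFun hey i
          have e3 := congrFun hez i
          have e4 := congrFun hxyz i
          simp only [hL, hR0, List.sum_append, Pi.add_apply, Pi.smul_apply,
            smul_eq_mul] at e1 e2 e3 e4 ⊢
          omega
        have hLmem : ∀ v ∈ L, IsPosRoot s t v ∧ lt v α := by
          intro v hv
          rw [hL] at hv
          simp only [List.mem_append] at hv
          rcases hv with (hv | hv) | hv
          · exact hlx v hv
          · exact hly v hv
          · exact hlz v hv
        have hLne : L ≠ [] := by
          intro h
          apply hα.1
          funext i
          have hmi := congrFun master i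
          rw [h] at hmi
          simp only [List.sum_nil, Pi.zero_apply, Pi.add_apply] at hmi
          show α i = 0
          omega
        set R : List (I → ℕ) := α :: α :: β :: R0 with hR
        have hRmem : ∀ v ∈ R, IsPosRoot s t v ∧ (v = α ∨ v = β ∨ lt (α+β) v) := by
          intro v hv
          rw [hR] at hv
          simp only [List.mem_cons] at hv
          rcases hv with rfl | rfl | rfl | hv
          · exact ⟨hα, Or.inl rfl⟩
          · exact ⟨hα, Or.inl rfl⟩
          · exact ⟨hβ, Or.inr (Or.inl rfl)⟩
          · rw [hR0] at hv
            simp only [List.mem_append] at hv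
            rcases hv with (hv | hv) | hv
            · exact ⟨(hrx v hv).1, Or.inr (Or.inr (hrx v hv).2)⟩
            · exact ⟨(hry v hv).1, Or.inr (Or.inr (hry v hv).2)⟩
            · exact ⟨(hrz v hv).1, Or.inr (Or.inr (hrz v hv).2)⟩
        apply hExtra
        refine ⟨L.length, R.length, fun a => L.get a, fun b => R.get b, ?_, ?_, ?_, ?_, ?_, ?_⟩
        · have := List.length_pos_iff.mpr hLne
          omega
        · rw [hR]; simp
        · intro a
          have hma : L.get a ∈ L := List.get_mem L a
          exact (hLmem _ hma).1
        · intro b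
          have hmb : R.get b ∈ R := List.get_mem R b
          exact (hRmem _ hmb).1
        · intro a b
          show lt (L.get a) (R.get b)
          have hma : L.get a ∈ L := List.get_mem L a
          have hmb : R.get b ∈ R := List.get_mem R b
          obtain ⟨hroot_a, hlt_a⟩ := hLmem _ hma
          obtain ⟨hroot_b, hcase_b⟩ := hRmem _ hmb
          rcases hcase_b with he | he | hb
          · rw [he]; exact hlt_a
          · rw [he]; exact hTrans _ α β hroot_a hα hβ hlt_a hlt
          · exact hTrans _ (α+β) _ hroot_a hsum hroot_b
              (hTrans _ α (α+β) hroot_a hα hsum hlt_a hltconv.1) hb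
        · rw [sum_get, sum_get, master, hR]
          simp only [List.sum_cons]
          funext i
          simp only [Pi.add_apply]
          omega
  -- conclude
  rintro ⟨k, γ, hk1, hroots, hbetween, hsumγ⟩
  apply key k (Multiset.map γ Finset.univ.val)
  · simp
  · intro x hx
    obtain ⟨a, _, rfl⟩ := Multiset.mem_map.mp hx
    exact ⟨hroots a, hbetween a⟩
  · rw [← hsumγ]
    rfl


end ADEShuffle
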